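/- arXiv:1702.07867 — 7 statements merged into one kernel-verified Lean document; each statement's English description precedes it below -/
import Mathlib

section
/- A Tychonoff space that is a k-space is an Ascoli space; that is, if X is a Tychonoff k-space, then every compact subset of C(X) with the compact-open topology is equicontinuous. -/
/-- A Tychonoff space `X` is Ascoli if every compact subset of `C_k(X)`
(the space of continuous real-valued functions with the compact-open topology)
is equicontinuous. -/
def IsAscoli (X : Type*) [TopologicalSpace X] : Prop :=
  ∀ K : Set C(X, ℝ), IsCompact K → Equicontinuous fun f : K => (f : X → ℝ)

/-- Arzelà–Ascoli converse for a compact domain: a compact set of continuous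
functions on a compact space is equicontinuous. -/
lemma equicontinuous_of_isCompact_compactSpace {K : Type*} [TopologicalSpace K]
    [CompactSpace K] {H : Set C(K, ℝ)} (hH : IsCompact H) :
    Equicontinuous fun f : H => ⇑(f : C(K, ℝ)) := by
  intro x₀
  rw [Metric.equicontinuousAt_iff_right]
  intro ε hε
  obtain ⟨t, htf, hcov⟩ := (Metric.totallyBounded_iff.mp hH.totallyBounded) (ε / 3) (by positivity)
  have hev : ∀ᶠ y in nhds x₀, ∀ g ∈ t, dist (g y) (g x₀) < ε / 3 := by
    rw [Filter.eventually_all_finite htf]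
    intro g _
    exact Metric.continuousAt_iff'.mp g.continuous.continuousAt (ε / 3) (by positivity)
  filter_upwards [hev] with y hy f
  obtain ⟨g, hgt, hfg⟩ := Set.mem_iUnion₂.mp (hcov f.2)
  rw [Metric.mem_ball] at hfg
  have h1 : dist ((f : C(K, ℝ)) x₀) (g x₀) ≤ dist (f : C(K, ℝ)) g :=
    ContinuousMap.dist_apply_le_dist x₀
  have h2 : dist (g y) ((f : C(K, ℝ)) y) ≤ dist (f : C(K, ℝ)) g := by
    rw [dist_comm]; exact ContinuousMap.dist_apply_le_dist y
  have h3 := hy g hgt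
  rw [dist_comm (g y) (g x₀)] at h3
  calc dist ((f : C(K, ℝ)) x₀) ((f : C(K, ℝ)) y)
      ≤ dist ((f : C(K, ℝ)) x₀) (g x₀) + dist (g x₀) (g y) + dist (g y) ((f : C(K, ℝ)) y) :=
        dist_triangle4 _ _ _ _
    _ < ε := by linarith

/-- Every Tychonoff k-space is Ascoli. -/
theorem isAscoli_of_kSpace {X : Type*} [TopologicalSpace X] [T2Space X]
    [CompletelyRegularSpace X]
    (hk : ∀ A : Set X, (∀ K : Set X, IsCompact K → IsClosed ((↑) ⁻¹' A : Set K)) →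
      IsClosed A) :
    IsAscoli X := by
  intro H hH
  haveI : CompactSpace H := isCompact_iff_compactSpace.mp hH
  -- the evaluation map into `C(H, ℝ)`
  set Φ : X → C(H, ℝ) := fun y =>
    ⟨fun f => (f : C(X, ℝ)) y,
      (continuous_eval_const y).comp continuous_subtype_val⟩ with hΦdef
  -- `Φ` restricted to any compact set is continuous
  have hΦK : ∀ K : Set X, IsCompact K → Continuous fun k : K => Φ k := by
    intro K hK
    haveI : CompactSpace K := isCompact_iff_compactSpace.mp hK
    have hres : IsCompact ((fun f : C(X, ℝ) => f.restrict K) '' H) :=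
      hH.image (ContinuousMap.continuous_restrict K)
    have E' := equicontinuous_of_isCompact_compactSpace hres
    -- equicontinuity of the restricted family indexed by `H`
    have E : Equicontinuous fun f : H => ⇑((f : C(X, ℝ)).restrict K) := by
      intro x U hU
      exact (E' x U hU).mono fun y hy f =>
        hy ⟨(f : C(X, ℝ)).restrict K, Set.mem_image_of_mem _ f.2⟩
    rw [continuous_iff_continuousAt]
    intro k₀
    rw [Metric.continuousAt_iff']
    intro ε hε
    have := Metric.equicontinuousAt_iff_right.mp (E k₀) (ε / 2) (by positivity)
    filter_upwards [this] with y hy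
    have hle : dist (Φ y) (Φ (k₀ : X)) ≤ ε / 2 := by
      rw [ContinuousMap.dist_le (by positivity)]
      intro f
      have := hy f
      rw [dist_comm] at this
      exact le_of_lt this
    exact lt_of_le_of_lt hle (by linarith)
  -- hence `Φ` is continuous by the k-space property
  have hΦ : Continuous Φ := by
    rw [continuous_iff_isClosed]
    intro S hS
    apply hk
    intro K hK
    have : ((↑) ⁻¹' (Φ ⁻¹' S) : Set K) = (fun k : K => Φ k) ⁻¹' S := rfl
    rw [this]
    exact hS.preimage (hΦK K hK)
  -- continuity of `Φ` gives equicontinuity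
  intro x₀
  rw [Metric.equicontinuousAt_iff_right]
  intro ε hε
  have := Metric.continuousAt_iff'.mp (hΦ.continuousAt (x := x₀)) ε hε
  filter_upwards [this] with y hy f
  have h1 : dist (Φ y f) (Φ x₀ f) ≤ dist (Φ y) (Φ x₀) := ContinuousMap.dist_apply_le_dist f
  rw [dist_comm]
  exact lt_of_le_of_lt h1 hy
end

section
/- Suppose a Tychonoff space X admits a family {Uᵢ : i ∈ I} of open subsets, a set of points {aᵢ : i ∈ I} with aᵢ ∈ Uᵢ for each i, and a point z ∈ X such that (a) every compact subset of X meets only finitely many Uᵢ, and (b) z is a cluster point of {aᵢ : i ∈ I}. Then X is not an Ascoli space. -/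
/-- A sufficient condition for a Tychonoff space to fail the Ascoli property:
there are open sets `U i`, points `a i ∈ U i` and a point `z` such that every
compact set meets only finitely many `U i`, while every neighborhood of `z`
contains `a i` for infinitely many `i`. -/
theorem not_isAscoli_of_family {X : Type*} [TopologicalSpace X] [T2Space X]
    [CompletelyRegularSpace X] {I : Type*} (U : I → Set X) (a : I → X) (z : X)
    (hopen : ∀ i, IsOpen (U i)) (hmem : ∀ i, a i ∈ U i)
    (hfin : ∀ C : Set X, IsCompact C → {i : I | (C ∩ U i).Nonempty}.Finite)
    (hcluster : ∀ V ∈ nhds z, {i : I | a i ∈ V}.Infinite) :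
    ¬ IsAscoli X := by
  classical
  intro hA
  -- Construct bump functions `f i` with `f i (a i) = 1`, vanishing outside `U i`.
  have hf : ∀ i, ∃ f : C(X, ℝ), f (a i) = 1 ∧ (∀ x ∉ U i, f x = 0) := by
    intro i
    obtain ⟨g, hgc, hg0, hg1⟩ := CompletelyRegularSpace.completely_regular (a i) (U i)ᶜ
      (hopen i).isClosed_compl (by simp [hmem i])
    refine ⟨⟨fun x => 1 - (g x : ℝ), by fun_prop⟩, ?_, ?_⟩
    · simp [hg0]
    · intro x hx
      have : g x = 1 := hg1 hx
      simp [this]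
  choose f hf1 hf0 using hf
  letI : TopologicalSpace I := ⊥
  haveI : DiscreteTopology I := ⟨rfl⟩
  -- The family `f i` tends to `0` in `C(X, ℝ)` along the cofinite filter.
  have htend : Filter.Tendsto f Filter.cofinite (nhds (0 : C(X, ℝ))) := by
    rw [ContinuousMap.tendsto_iff_forall_isCompact_tendstoUniformlyOn]
    intro C hC
    have hev : ∀ᶠ i in Filter.cofinite, ∀ x ∈ C, f i x = 0 := by
      rw [Filter.eventually_cofinite]
      refine (hfin C hC).subset ?_
      intro i hi
      push_neg at hi
      obtain ⟨x, hx, hfx⟩ := hi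
      exact ⟨x, hx, by_contra fun hxU => hfx (hf0 i x hxU)⟩
    rw [Metric.tendstoUniformlyOn_iff]
    intro ε hε
    filter_upwards [hev] with i hi x hx
    simp [hi x hx, hε]
  -- Hence `{f i} ∪ {0}` is compact as the continuous image of `OnePoint I`.
  let F : OnePoint I → C(X, ℝ) := fun o => o.elim 0 f
  have hFc : Continuous F := by
    rw [OnePoint.continuous_iff_from_discrete]
    exact htend
  have hK : IsCompact (Set.range F) := isCompact_range hFc
  have heq := hA (Set.range F) hK
  -- Equicontinuity at `z` fails.
  have h := heq z
  rw [Metric.equicontinuousAt_iff_right] at h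
  have hW := h (1 / 2) (by norm_num)
  set V : Set X := {x | ∀ g : Set.range F, dist ((g : C(X, ℝ)) z) ((g : C(X, ℝ)) x) < 1 / 2}
    with hVdef
  have hV : V ∈ nhds z := hW
  -- only finitely many `i` have `z ∈ U i`
  have hzfin : {i : I | z ∈ U i}.Finite := by
    have := hfin {z} isCompact_singleton
    refine this.subset ?_
    intro i hi
    exact ⟨z, rfl, hi⟩
  obtain ⟨i, hiV, hiU⟩ : ∃ i, a i ∈ V ∧ z ∉ U i := by
    obtain ⟨i, hi, hi'⟩ := ((hcluster V hV).diff hzfin).nonempty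
    exact ⟨i, hi, hi'⟩
  have hfz : f i z = 0 := hf0 i z hiU
  have := hiV ⟨F i, ⟨(i : OnePoint I), rfl⟩⟩
  simp only [F, OnePoint.elim, Option.elim] at this
  rw [hfz, hf1 i] at this
  norm_num at this
end

section
/- If a topological group G is an MK_ω-space and G is metrizable, then G is locally compact. -/
open Filter Topology

/-- A metrizable topological group which is an `MK_ω`-space is locally compact. -/
theorem locallyCompact_of_metrizable_MKomega_group {G : Type*} [Group G]
    [TopologicalSpace G] [IsTopologicalGroup G] [TopologicalSpace.MetrizableSpace G]
    (C : ℕ → Set G) (hmono : Monotone C)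
    (hcomp : ∀ n, IsCompact (C n)) (hmetr : ∀ n, TopologicalSpace.MetrizableSpace (C n))
    (hunion : ⋃ n, C n = Set.univ)
    (hfinal : ∀ A : Set G, IsClosed A ↔ ∀ n, IsClosed ((↑) ⁻¹' A : Set (C n))) :
    LocallyCompactSpace G := by
  letI : MetricSpace G := TopologicalSpace.metrizableSpaceMetric G
  -- Any subset of the range of a sequence escaping every `C n` is closed.
  have hclosed : ∀ (f : ℕ → G), (∀ n, f n ∉ C n) → ∀ T ⊆ Set.range f, IsClosed T := by
    intro f hf T hT
    rw [hfinal]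
    intro m
    have hsub : (Subtype.val ⁻¹' T : Set (C m)) ⊆ Subtype.val ⁻¹' (f '' Set.Iio m) := by
      rintro ⟨y, hyC⟩ hyT
      obtain ⟨k, rfl⟩ := hT hyT
      refine Set.mem_preimage.mpr ⟨k, ?_, rfl⟩
      by_contra hk
      simp only [Set.mem_Iio, not_lt] at hk
      exact hf k (hmono hk hyC)
    exact ((((Set.finite_Iio m).image f).preimage Subtype.val_injective.injOn).subset
      hsub).isClosed
  have : WeaklyLocallyCompactSpace G := by
    constructor
    intro x
    by_contra h
    push_neg at h
    have hn : ∀ n, C n ∉ 𝓝 x := fun n hmem => h (C n) (hcomp n) hmem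
    obtain ⟨U, hU⟩ := (𝓝 x).exists_antitone_basis
    have hex : ∀ n, ∃ y, y ∈ U n ∧ y ∉ C n := by
      intro n
      by_contra hc
      push_neg at hc
      exact hn n (Filter.mem_of_superset (hU.mem n) hc)
    choose f hfU hfC using hex
    have htend : Tendsto f atTop (𝓝 x) := hU.tendsto hfU
    have hK : IsCompact (insert x (Set.range f)) := htend.isCompact_insert_range
    have hrange : (Set.range f).Infinite := by
      intro hfin
      have hfib : ∀ y : G, (f ⁻¹' {y}).Finite := by
        intro y
        have hy : y ∈ ⋃ n, C n := hunion ▸ Set.mem_univ y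
        obtain ⟨m, hm⟩ := Set.mem_iUnion.mp hy
        refine (Set.finite_Iio m).subset ?_
        intro k hk
        simp only [Set.mem_preimage, Set.mem_singleton_iff] at hk
        by_contra hkm
        simp only [Set.mem_Iio, not_lt] at hkm
        exact hfC k (hk ▸ hmono hkm hm)
      have : (Set.univ : Set ℕ).Finite := by
        refine (hfin.biUnion fun y _ => hfib y).subset ?_
        intro n _
        exact Set.mem_biUnion ⟨n, rfl⟩ rfl
      exact Set.infinite_univ this
    obtain ⟨y, hyK, hacc⟩ :=
      hrange.exists_accPt_of_subset_isCompact hK (Set.subset_insert _ _)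
    rw [accPt_principal_iff_clusterPt] at hacc
    have hycl : y ∈ closure (Set.range f \ {y}) := mem_closure_iff_clusterPt.mpr hacc
    rw [(hclosed f hfC _ Set.diff_subset).closure_eq] at hycl
    exact hycl.2 rfl
  infer_instance
end

section
/- Let E be a separable metrizable infinite-dimensional locally convex space. Then the dual E' with the compact-open topology admits a weaker metrizable locally convex vector topology, and consequently every compact subset of (E', τ_k) is metrizable. -/
open Topology TopologicalSpace

variable {E : Type*} [AddCommGroup E] [Module ℝ E] [TopologicalSpace E]
  [IsTopologicalAddGroup E] [ContinuousSMul ℝ E]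

/-- The compact-open topology on the dual of `E`, induced from `C(E, ℝ)`. -/
noncomputable def tauK (E : Type*) [AddCommGroup E] [Module ℝ E] [TopologicalSpace E] :
    TopologicalSpace (E →L[ℝ] ℝ) :=
  TopologicalSpace.induced (fun χ => (⟨χ, χ.continuous⟩ : C(E, ℝ))) inferInstance

/-- Evaluation of continuous functionals along a sequence of points, as a linear map. -/
def evalSeq {E : Type*} [AddCommGroup E] [Module ℝ E] [TopologicalSpace E] (s : ℕ → E) :
    (E →L[ℝ] ℝ) →ₗ[ℝ] (ℕ → ℝ) where
  toFun := fun χ n => χ (s n)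
  map_add' := fun χ ψ => by ext n; simp
  map_smul' := fun c χ => by ext n; simp

/-- The topology of pointwise convergence on the points of `s`. -/
def weakSeqTopology {E : Type*} [AddCommGroup E] [Module ℝ E] [TopologicalSpace E] (s : ℕ → E) :
    TopologicalSpace (E →L[ℝ] ℝ) :=
  TopologicalSpace.induced (evalSeq s) inferInstance

/-- If `s` has dense range, then `evalSeq s` is injective. -/
theorem evalSeq_injective {E : Type*} [AddCommGroup E] [Module ℝ E] [TopologicalSpace E]
    {s : ℕ → E} (hs : DenseRange s) : Function.Injective (evalSeq s) := by
  intro χ ψ h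
  have heq : (χ : E → ℝ) = ψ := by
    refine Continuous.ext_on hs χ.continuous ψ.continuous ?_
    rintro _ ⟨n, rfl⟩
    exact congrFun h n
  ext x
  exact congrFun heq x

/-- The compact-open topology is finer than pointwise convergence on `s`. -/
theorem tauK_le_weakSeqTopology {E : Type*} [AddCommGroup E] [Module ℝ E] [TopologicalSpace E]
    (s : ℕ → E) : tauK E ≤ weakSeqTopology s := by
  letI : TopologicalSpace (E →L[ℝ] ℝ) := tauK E
  have h1 : Continuous (fun χ : E →L[ℝ] ℝ => (⟨χ, χ.continuous⟩ : C(E, ℝ))) :=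
    continuous_induced_dom
  have h2 : Continuous (fun g : C(E, ℝ) => fun n => g (s n)) :=
    continuous_pi fun n => ContinuousEvalConst.continuous_eval_const (s n)
  have h3 : Continuous (⇑(evalSeq s)) := h2.comp h1
  exact continuous_iff_le_induced.mp h3

/-- `weakSeqTopology s` is metrizable when `s` has dense range. -/
theorem weakSeqTopology_metrizable {E : Type*} [AddCommGroup E] [Module ℝ E] [TopologicalSpace E]
    {s : ℕ → E} (hs : DenseRange s) : @MetrizableSpace _ (weakSeqTopology s) := by
  letI : TopologicalSpace (E →L[ℝ] ℝ) := weakSeqTopology s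
  have hemb : Topology.IsEmbedding (⇑(evalSeq s)) := ⟨⟨rfl⟩, evalSeq_injective hs⟩
  exact hemb.metrizableSpace

/-- For a separable metrizable infinite-dimensional locally convex space `E`,
the dual with the compact-open topology `τ_k` admits a weaker (coarser)
metrizable locally convex vector topology, and consequently every
`τ_k`-compact subset of the dual is metrizable. -/
theorem dual_admits_weaker_metrizable_topology
    [LocallyConvexSpace ℝ E] [MetrizableSpace E] [SeparableSpace E]
    (hinf : ¬ FiniteDimensional ℝ E) :
    (∃ t : TopologicalSpace (E →L[ℝ] ℝ), tauK E ≤ t ∧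
      @MetrizableSpace _ t ∧ @IsTopologicalAddGroup _ t _ ∧ @ContinuousSMul ℝ _ _ _ t ∧
      @LocallyConvexSpace ℝ _ _ _ _ _ t) ∧
    ∀ K : Set (E →L[ℝ] ℝ), @IsCompact _ (tauK E) K →
      @MetrizableSpace K ((tauK E).induced ((↑) : K → (E →L[ℝ] ℝ))) := by
  have hne : Nonempty E := ⟨0⟩
  obtain ⟨s, hs⟩ := TopologicalSpace.exists_dense_seq E
  constructor
  · exact ⟨weakSeqTopology s, tauK_le_weakSeqTopology s, weakSeqTopology_metrizable hs,
      topologicalAddGroup_induced (evalSeq s).toAddMonoidHom,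
      continuousSMul_induced (evalSeq s),
      LocallyConvexSpace.induced (evalSeq s)⟩
  · intro K hK
    have hcmp : @CompactSpace K ((tauK E).induced ((↑) : K → (E →L[ℝ] ℝ))) := by
      letI : TopologicalSpace (E →L[ℝ] ℝ) := tauK E
      exact isCompact_iff_compactSpace.mp hK
    have hmet2 : @MetrizableSpace K ((weakSeqTopology s).induced ((↑) : K → (E →L[ℝ] ℝ))) := by
      letI : TopologicalSpace (E →L[ℝ] ℝ) := weakSeqTopology s
      haveI : MetrizableSpace (E →L[ℝ] ℝ) := weakSeqTopology_metrizable hs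
      have h := (Topology.IsEmbedding.subtypeVal (p := (· ∈ K))).metrizableSpace
      exact h
    have ht2k : @T2Space K ((weakSeqTopology s).induced ((↑) : K → (E →L[ℝ] ℝ))) :=
      @TopologicalSpace.t2Space_of_metrizableSpace K
        ((weakSeqTopology s).induced ((↑) : K → (E →L[ℝ] ℝ))) hmet2
    have hcont : @Continuous K K ((tauK E).induced ((↑) : K → (E →L[ℝ] ℝ)))
        ((weakSeqTopology s).induced ((↑) : K → (E →L[ℝ] ℝ))) id :=
      (continuous_id_iff_le (t := (tauK E).induced ((↑) : K → (E →L[ℝ] ℝ)))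
        (t' := (weakSeqTopology s).induced ((↑) : K → (E →L[ℝ] ℝ)))).mpr
        (induced_mono (tauK_le_weakSeqTopology s))
    have hce : @Topology.IsClosedEmbedding K K
        ((tauK E).induced ((↑) : K → (E →L[ℝ] ℝ)))
        ((weakSeqTopology s).induced ((↑) : K → (E →L[ℝ] ℝ))) id :=
      @Continuous.isClosedEmbedding K K ((tauK E).induced ((↑) : K → (E →L[ℝ] ℝ)))
        ((weakSeqTopology s).induced ((↑) : K → (E →L[ℝ] ℝ))) hcmp ht2k id hcont
        Function.injective_id
    exact @Topology.IsEmbedding.metrizableSpace K K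
      ((tauK E).induced ((↑) : K → (E →L[ℝ] ℝ)))
      ((weakSeqTopology s).induced ((↑) : K → (E →L[ℝ] ℝ))) hmet2 id
      (@Topology.IsClosedEmbedding.toIsEmbedding K K
        ((tauK E).induced ((↑) : K → (E →L[ℝ] ℝ)))
        ((weakSeqTopology s).induced ((↑) : K → (E →L[ℝ] ℝ))) id hce)
end

section
/- Let X = lim→ Xₙ be the inductive limit of a sequence of metrizable topological groups with Xₙ a closed subgroup of Xₙ₊₁ for every n. If there exists m such that Xₙ is open in Xₙ₊₁ for all n ≥ m, then X is metrizable. -/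
/-- If `X = lim→ Xₙ` is the inductive limit of a sequence of metrizable groups
with each `Xₙ` a closed subgroup of `Xₙ₊₁`, and `Xₙ` is open in `Xₙ₊₁` for all
`n ≥ m`, then `X` is metrizable. -/
theorem metrizable_of_eventually_open_inductive_limit {X : Type*} [Group X]
    [TopologicalSpace X] [IsTopologicalGroup X] (H : ℕ → Subgroup X)
    (hmono : Monotone H) (hunion : ∀ x : X, ∃ n, x ∈ H n)
    (hmetr : ∀ n, TopologicalSpace.MetrizableSpace (H n))
    (hclosed : ∀ n, IsClosed {x : H (n + 1) | (x : X) ∈ H n})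
    (hfinal : ∀ U : Set X, IsOpen U ↔ ∀ n, IsOpen ((↑) ⁻¹' U : Set (H n)))
    (m : ℕ) (hopen : ∀ n ≥ m, IsOpen {x : H (n + 1) | (x : X) ∈ H n}) :
    TopologicalSpace.MetrizableSpace X := by
  classical
  haveI := hmetr
  -- Step 1: `H m` is open in `X`.
  have key : ∀ k, IsOpen ((↑) ⁻¹' (H m : Set X) : Set (H (m + k))) := by
    intro k
    induction k with
    | zero =>
      convert isOpen_univ
      ext x
      simpa using x.2
    | succ k ih =>
      show IsOpen ((↑) ⁻¹' (H m : Set X) : Set (H (m + k + 1)))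
      obtain ⟨U, hU, hUe⟩ := isOpen_induced_iff.1 ih
      have hV : IsOpen {x : H (m + k + 1) | (x : X) ∈ H (m + k)} :=
        hopen (m + k) (Nat.le_add_right m k)
      have : ((↑) ⁻¹' (H m : Set X) : Set (H (m + k + 1)))
          = ((↑) ⁻¹' U) ∩ {x : H (m + k + 1) | (x : X) ∈ H (m + k)} := by
        ext x
        constructor
        · intro hx
          have hxk : (x : X) ∈ H (m + k) := hmono (Nat.le_add_right m k) hx
          have : (⟨(x : X), hxk⟩ : H (m + k)) ∈ ((↑) ⁻¹' U : Set (H (m + k))) := by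
            rw [hUe]; exact hx
          exact ⟨this, hxk⟩
        · rintro ⟨hxU, hxk⟩
          have : (⟨(x : X), hxk⟩ : H (m + k)) ∈ ((↑) ⁻¹' (H m : Set X) : Set (H (m + k))) := by
            rw [← hUe]; exact hxU
          exact this
      rw [this]
      exact (hU.preimage continuous_subtype_val).inter hV
  have hHm : IsOpen (H m : Set X) := by
    rw [hfinal]
    intro n
    rcases le_or_gt n m with hn | hn
    · convert isOpen_univ
      ext x
      simpa using hmono hn x.2
    · obtain ⟨k, rfl⟩ := Nat.exists_eq_add_of_le hn.le
      exact key k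
  -- Step 2: `X` is T1 (the singleton `{1}` is closed).
  have h1 : IsClosed ({(1 : X)} : Set X) := by
    have hclosedHm : IsClosed (H m : Set X) := (H m).isClosed_of_isOpen hHm
    have hemb := hclosedHm.isClosedEmbedding_subtypeVal
    have : ({(1 : X)} : Set X) = Subtype.val '' ({(1 : H m)} : Set (H m)) := by
      simp
    rw [this]
    exact hemb.isClosedMap _ isClosed_singleton
  haveI : T1Space X := IsTopologicalGroup.t1Space X h1
  -- Step 3: `nhds 1` is countably generated.
  haveI : Filter.IsCountablyGenerated (nhds (1 : X)) := by
    have hmap : Filter.map Subtype.val (nhds (1 : H m)) = nhds ((1 : H m) : X) :=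
      hHm.isOpenEmbedding_subtypeVal.map_nhds_eq (1 : H m)
    haveI : FirstCountableTopology (H m) := inferInstance
    rw [show (1 : X) = ((1 : H m) : X) from rfl, ← hmap]
    infer_instance
  -- Step 4: metrizability via the right uniformity.
  letI : UniformSpace X := IsTopologicalGroup.rightUniformSpace X
  haveI : Filter.IsCountablyGenerated (uniformity X) := by
    rw [uniformity_eq_comap_nhds_one' X]
    infer_instance
  exact UniformSpace.metrizableSpace
end

section
/- Let X = lim→ Xₙ be the inductive limit of a sequence of metrizable topological groups with Xₙ a closed subgroup of Xₙ₊₁ and all Xₙ locally compact. Then X contains an open subgroup that is an MK_ω-space. -/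
open Set Pointwise Topology

/-- A topological space is an `MK_ω`-space if it is the inductive limit of an
increasing sequence of its metrizable compact subsets. -/
def IsMKOmega (X : Type*) [TopologicalSpace X] : Prop :=
  ∃ C : ℕ → Set X, Monotone C ∧ (∀ n, IsCompact (C n)) ∧
    (∀ n, TopologicalSpace.MetrizableSpace (C n)) ∧ (⋃ n, C n = Set.univ) ∧
    ∀ A : Set X, IsClosed A ↔ ∀ n, IsClosed ((↑) ⁻¹' A : Set (C n))

/-- If `X = lim→ Xₙ` is the inductive limit of a sequence of locally compact
metrizable groups, each closed in the next, then `X` contains an open subgroup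
which is an `MK_ω`-space. -/
theorem exists_open_MKomega_subgroup {X : Type*} [Group X]
    [TopologicalSpace X] [IsTopologicalGroup X] (H : ℕ → Subgroup X)
    (hmono : Monotone H) (hunion : ∀ x : X, ∃ n, x ∈ H n)
    (hmetr : ∀ n, TopologicalSpace.MetrizableSpace (H n))
    (hclosed : ∀ n, IsClosed {x : H (n + 1) | (x : X) ∈ H n})
    (hlc : ∀ n, LocallyCompactSpace (H n))
    (hfinal : ∀ U : Set X, IsOpen U ↔ ∀ n, IsOpen ((↑) ⁻¹' U : Set (H n))) :
    ∃ Y : Subgroup X, IsOpen (Y : Set X) ∧ IsMKOmega Y := by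
  classical
  -- compact neighborhoods of 1 in each `H n`
  have hK : ∀ n, ∃ K : Set (H n), IsCompact K ∧ K ∈ nhds 1 := fun n => by
    haveI := hlc n; exact exists_compact_mem_nhds 1
  choose K hKc hKn using hK
  set V : ℕ → Set X := fun n => Subtype.val '' K n with hVdef
  have hV1 : ∀ n, (1 : X) ∈ V n := fun n => ⟨1, mem_of_mem_nhds (hKn n), rfl⟩
  have hVsub : ∀ n, V n ⊆ H n := by rintro n x ⟨k, _, rfl⟩; exact k.2
  have hVc : ∀ n, IsCompact (V n) := fun n => (hKc n).image continuous_subtype_val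
  set S : ℕ → Set X := fun k => ⋃ n ∈ Set.Iic k, V n with hSdef
  set T : ℕ → Set X := fun k => {1} ∪ (S k ∪ (S k)⁻¹) with hTdef
  have hT1 : ∀ k, (1 : X) ∈ T k := fun k => Or.inl rfl
  have hSmono : Monotone S := fun a b hab =>
    Set.biUnion_subset_biUnion_left (Set.Iic_subset_Iic.mpr hab)
  have hTmono : Monotone T := fun a b hab =>
    Set.union_subset_union_right _ (Set.union_subset_union (hSmono hab)
      (Set.inv_subset_inv.mpr (hSmono hab)))
  have hTsymm : ∀ k, (T k)⁻¹ = T k := fun k => by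
    rw [hTdef]
    simp only [Set.union_inv, Set.inv_singleton, inv_one, inv_inv]
    rw [Set.union_comm ((S k)⁻¹) (S k)]
  have hVT : ∀ n k, n ≤ k → V n ⊆ T k := fun n k hnk =>
    (Set.subset_biUnion_of_mem (Set.mem_Iic.mpr hnk)).trans
      ((Set.subset_union_left).trans Set.subset_union_right)
  have hTsubH : ∀ k, T k ⊆ (H k : Set X) := by
    intro k x hx
    rcases hx with h1 | hS | hSi
    · rw [Set.mem_singleton_iff.mp h1]; exact (H k).one_mem
    · obtain ⟨n, hn, hxn⟩ := Set.mem_iUnion₂.mp hS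
      exact hmono hn (hVsub n hxn)
    · obtain ⟨n, hn, hxn⟩ := Set.mem_iUnion₂.mp (Set.mem_inv.mp hSi)
      exact (inv_mem_iff (G := X)).mp (hmono hn (hVsub n hxn))
  have hTc : ∀ k, IsCompact (T k) := by
    intro k
    have hSc : IsCompact (S k) :=
      (Set.finite_Iic k).isCompact_biUnion fun n _ => hVc n
    exact (isCompact_singleton).union (hSc.union hSc.inv)
  -- the building blocks
  set D : ℕ → Set X := fun k => T k ^ (k + 1) with hDdef
  have hDc : ∀ k, IsCompact (D k) := by
    intro k
    have : ∀ m, IsCompact (T k ^ (m + 1)) := by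
      intro m
      induction m with
      | zero => simpa [pow_one] using hTc k
      | succ m ih => rw [pow_succ]; exact ih.mul (hTc k)
    exact this k
  have hD1 : ∀ k, (1 : X) ∈ D k := fun k => Set.one_mem_pow (hT1 k)
  have hDsubH : ∀ k, D k ⊆ (H k : Set X) := by
    intro k
    have : ∀ m, T k ^ (m + 1) ⊆ (H k : Set X) := by
      intro m
      induction m with
      | zero => simpa [pow_one] using hTsubH k
      | succ m ih =>
        rw [pow_succ]
        rintro x ⟨a, ha, b, hb, rfl⟩
        exact mul_mem (ih ha) (hTsubH k hb)
    exact this k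
  have hDmono : Monotone D := by
    apply monotone_nat_of_le_succ
    intro k
    exact Set.pow_subset_pow (hTmono (Nat.le_succ k)) (hT1 (k + 1)) (by omega)
  have hDmul : ∀ j k, D j * D k ⊆ D (j + k + 1) := by
    intro j k
    have h1 : D j ⊆ T (j + k + 1) ^ (j + 1) :=
      Set.pow_subset_pow_left (hTmono (by omega))
    have h2 : D k ⊆ T (j + k + 1) ^ (k + 1) :=
      Set.pow_subset_pow_left (hTmono (by omega))
    calc D j * D k ⊆ T (j + k + 1) ^ (j + 1) * T (j + k + 1) ^ (k + 1) :=
          Set.mul_subset_mul h1 h2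
      _ = T (j + k + 1) ^ (j + k + 2) := by rw [← pow_add]; ring_nf
      _ = D (j + k + 1) := rfl
  have hDinv : ∀ k, (D k)⁻¹ = D k := fun k => by
    rw [hDdef]; rw [← inv_pow, hTsymm]
  have hTD : ∀ k, T k ⊆ D k := fun k =>
    (pow_one (T k)) ▸ Set.pow_subset_pow_right (hT1 k) (by omega)
  set Yset : Set X := ⋃ k, D k with hYdef
  -- `Yset` is a subgroup
  have hYone : (1 : X) ∈ Yset := Set.mem_iUnion.mpr ⟨0, hD1 0⟩
  have hYmul : ∀ a ∈ Yset, ∀ b ∈ Yset, a * b ∈ Yset := by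
    intro a ha b hb
    obtain ⟨j, hj⟩ := Set.mem_iUnion.mp ha
    obtain ⟨k, hk⟩ := Set.mem_iUnion.mp hb
    exact Set.mem_iUnion.mpr ⟨j + k + 1, hDmul j k (Set.mul_mem_mul hj hk)⟩
  have hYinv : ∀ a ∈ Yset, a⁻¹ ∈ Yset := by
    intro a ha
    obtain ⟨k, hk⟩ := Set.mem_iUnion.mp ha
    exact Set.mem_iUnion.mpr ⟨k, (hDinv k) ▸ Set.inv_mem_inv.mpr hk⟩
  -- `X` is Hausdorff
  haveI hT1X : T1Space X := by
    constructor
    intro x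
    rw [← isOpen_compl_iff, hfinal]
    intro n
    rw [Set.preimage_compl, isOpen_compl_iff]
    haveI := hmetr n
    have : (Subtype.val ⁻¹' {x} : Set (H n)).Subsingleton := fun a ha b hb =>
      Subtype.ext (ha.trans hb.symm)
    exact this.isClosed
  haveI hT2X : T2Space X := IsTopologicalGroup.t2Space_iff_one_closed.mpr
    isClosed_singleton
  -- key openness lemma
  have key : ∀ B : Set X, (∀ r, IsClosed (B ∩ D r)) → IsOpen (Yset \ B) := by
    intro B hB
    rw [hfinal]
    intro n
    rw [isOpen_iff_mem_nhds]
    rintro g ⟨hgY, hgB⟩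
    obtain ⟨j, hj⟩ := Set.mem_iUnion.mp hgY
    have h1 : (fun h : H n => g * h) '' K n ∈ nhds (g : H n) := by
      have := (Homeomorph.mulLeft g).isOpenMap.image_mem_nhds (hKn n)
      simpa using this
    set r : ℕ := j + n + 1 with hrdef
    have hPD : ∀ x : H n, x ∈ (fun h : H n => g * h) '' K n → (x : X) ∈ D r := by
      rintro _ ⟨k, hk, rfl⟩
      have hkV : (k : X) ∈ V n := ⟨k, hk, rfl⟩
      have hkD : (k : X) ∈ D n := hTD n (hVT n n le_rfl hkV)
      exact hDmul j n (Set.mul_mem_mul hj hkD)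
    have h2 : (Subtype.val ⁻¹' (B ∩ D r)ᶜ : Set (H n)) ∈ nhds (g : H n) := by
      refine ((hB r).isOpen_compl.preimage continuous_subtype_val).mem_nhds ?_
      simp only [Set.mem_preimage, Set.mem_compl_iff, Set.mem_inter_iff]
      exact fun h => hgB h.1
    filter_upwards [h1, h2] with x hx1 hx2
    refine ⟨Set.mem_iUnion.mpr ⟨r, hPD x hx1⟩, ?_⟩
    intro hxB
    exact hx2 ⟨hxB, hPD x hx1⟩
  have hYopen : IsOpen Yset := by
    have := key ∅ (fun r => by simp)
    simpa using this
  -- assemble the subgroup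
  have hex : ∃ YG : Subgroup X, (YG : Set X) = Yset :=
    ⟨{ carrier := Yset, one_mem' := hYone,
       mul_mem' := fun ha hb => hYmul _ ha _ hb,
       inv_mem' := fun ha => hYinv _ ha }, rfl⟩
  obtain ⟨YG, hYGcoe⟩ := hex
  have hmem₁ : ∀ z : X, z ∈ Yset → z ∈ YG := fun z h => by
    rw [← SetLike.mem_coe, hYGcoe]; exact h
  have hmem₂ : ∀ z : X, z ∈ YG → z ∈ Yset := fun z h => by
    rw [← hYGcoe]; exact SetLike.mem_coe.mpr h
  refine ⟨YG, by rw [hYGcoe]; exact hYopen, ?_⟩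
  -- the pieces, pulled back to the subgroup
  have hCcomp : ∀ k, IsCompact ((Subtype.val ⁻¹' D k) : Set YG) := by
    intro k
    rw [Topology.IsEmbedding.subtypeVal.isCompact_iff]
    have heq : (Subtype.val '' ((Subtype.val ⁻¹' D k) : Set YG)) = D k := by
      ext z
      constructor
      · rintro ⟨w, hw, rfl⟩; exact hw
      · intro hz
        exact ⟨⟨z, hmem₁ z (Set.mem_iUnion.mpr ⟨k, hz⟩)⟩, hz, rfl⟩
    rw [heq]
    exact hDc k
  have hCmet : ∀ k, TopologicalSpace.MetrizableSpace
      ((Subtype.val ⁻¹' D k) : Set YG) := by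
    intro k
    haveI := hmetr k
    have hf : Continuous fun x : ((Subtype.val ⁻¹' D k) : Set YG) =>
        (⟨x.1.1, hDsubH k x.2⟩ : H k) :=
      Continuous.subtype_mk (continuous_subtype_val.comp continuous_subtype_val) _
    have hemb : Topology.IsEmbedding fun x : ((Subtype.val ⁻¹' D k) : Set YG) =>
        (⟨x.1.1, hDsubH k x.2⟩ : H k) := by
      refine Topology.IsEmbedding.of_comp hf continuous_subtype_val ?_
      have : Topology.IsEmbedding
          fun x : ((Subtype.val ⁻¹' D k) : Set YG) => (x.1.1 : X) :=
        Topology.IsEmbedding.subtypeVal.comp Topology.IsEmbedding.subtypeVal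
      exact this
    exact hemb.metrizableSpace
  have hCunion : (⋃ k, ((Subtype.val ⁻¹' D k) : Set YG)) = Set.univ := by
    rw [Set.eq_univ_iff_forall]
    intro x
    obtain ⟨k, hk⟩ := Set.mem_iUnion.mp (hmem₂ _ x.2)
    exact Set.mem_iUnion.mpr ⟨k, hk⟩
  have hcrit : ∀ A : Set YG, IsClosed A ↔
      ∀ k, IsClosed ((↑) ⁻¹' A : Set ((Subtype.val ⁻¹' D k) : Set YG)) := by
    intro A
    constructor
    · exact fun hA k => hA.preimage continuous_subtype_val
    · intro hA
      have hBcl : ∀ r, IsClosed (Subtype.val '' A ∩ D r) := by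
        intro r
        haveI : CompactSpace ((Subtype.val ⁻¹' D r) : Set YG) :=
          isCompact_iff_compactSpace.mp (hCcomp r)
        have h1 : IsCompact ((↑) ⁻¹' A : Set ((Subtype.val ⁻¹' D r) : Set YG)) :=
          (hA r).isCompact
        have h2 : IsCompact ((fun x : ((Subtype.val ⁻¹' D r) : Set YG) =>
            (x.1.1 : X)) '' ((↑) ⁻¹' A)) :=
          h1.image (continuous_subtype_val.comp continuous_subtype_val)
        have heq : (fun x : ((Subtype.val ⁻¹' D r) : Set YG) => (x.1.1 : X)) ''
            ((↑) ⁻¹' A) = Subtype.val '' A ∩ D r := by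
          ext z
          constructor
          · rintro ⟨x, hx, rfl⟩
            exact ⟨⟨x.1, hx, rfl⟩, x.2⟩
          · rintro ⟨⟨a, haA, rfl⟩, hzD⟩
            exact ⟨⟨a, hzD⟩, haA, rfl⟩
        rw [heq] at h2
        exact h2.isClosed
      have hopen : IsOpen (Yset \ Subtype.val '' A) := key _ hBcl
      have hAeq : A = Subtype.val ⁻¹' ((Yset \ Subtype.val '' A)ᶜ) := by
        ext x
        simp only [Set.mem_preimage, Set.mem_compl_iff, Set.mem_diff, not_and,
          not_not]
        constructor
        · intro hxA _
          exact ⟨x, hxA, rfl⟩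
        · intro hx
          obtain ⟨b, hbA, hbx⟩ := hx (hmem₂ _ x.2)
          have : b = x := Subtype.ext hbx
          exact this ▸ hbA
      rw [hAeq]
      exact (hopen.isClosed_compl).preimage continuous_subtype_val
  exact ⟨fun k => Subtype.val ⁻¹' D k, fun a b hab => Set.preimage_mono (hDmono hab),
    hCcomp, hCmet, hCunion, hcrit⟩
end

section
/- The product ℝ^ω × φ, where φ is the strict inductive limit of the spaces ℝⁿ, is not an Ascoli space. In particular, the product of a metrizable space and a sequential space need not be Ascoli. -/
open Filter Topology Set

theorem myLCS_induced {E F : Type*} [AddCommGroup E] [Module ℝ E]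
    [AddCommGroup F] [Module ℝ F] [tF : TopologicalSpace F] [LocallyConvexSpace ℝ F]
    (f : E →ₗ[ℝ] F) : @LocallyConvexSpace ℝ E _ _ _ _ (tF.induced f) := by
  letI : TopologicalSpace E := tF.induced f
  refine LocallyConvexSpace.ofBases ℝ E (fun _ s => f ⁻¹' s)
    (fun x s => s ∈ 𝓝 (f x) ∧ Convex ℝ s) (fun x => ?_) (fun x s hs => hs.2.linear_preimage f)
  rw [nhds_induced]
  exact (LocallyConvexSpace.convex_basis (f x)).comap f

theorem phi_linear_continuous [t : TopologicalSpace (ℕ →₀ ℝ)]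
    (hincl : ∀ n : ℕ, Continuous fun c : ℝ => Finsupp.single n c)
    (hfinest : ∀ t' : TopologicalSpace (ℕ →₀ ℝ),
      @IsTopologicalAddGroup _ t' _ → @ContinuousSMul ℝ _ _ _ t' →
      @LocallyConvexSpace ℝ _ _ _ _ _ t' →
      (∀ n : ℕ, @Continuous _ _ _ t' fun c : ℝ => Finsupp.single n c) → t ≤ t')
    (ℓ : (ℕ →₀ ℝ) →ₗ[ℝ] ℝ) : Continuous ℓ := by
  set t₂ : TopologicalSpace (ℕ →₀ ℝ) := TopologicalSpace.induced ℓ inferInstance with ht₂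
  have h1 : @IsTopologicalAddGroup (ℕ →₀ ℝ) t₂ _ := topologicalAddGroup_induced ℓ
  have h2 : @ContinuousSMul ℝ (ℕ →₀ ℝ) _ _ t₂ := continuousSMul_induced (ℓ : (ℕ →₀ ℝ) →ₗ[ℝ] ℝ)
  have h3 : @LocallyConvexSpace ℝ (ℕ →₀ ℝ) _ _ _ _ t₂ := myLCS_induced ℓ
  have h4 : ∀ n : ℕ, @Continuous _ _ _ t₂ fun c : ℝ => Finsupp.single n c := by
    intro n
    rw [ht₂]
    apply continuous_induced_rng.mpr
    have : (fun c : ℝ => ℓ (Finsupp.single n c)) = fun c : ℝ => c * ℓ (Finsupp.single n 1) := by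
      ext c
      rw [← Finsupp.smul_single_one, map_smul, smul_eq_mul]
    rw [Function.comp_def, this]
    exact continuous_id.mul continuous_const
  have hle := hfinest t₂ h1 h2 h3 h4
  rw [continuous_iff_le_induced]
  exact hle

theorem phi_compact_support [t : TopologicalSpace (ℕ →₀ ℝ)]
    (hcont : ∀ ℓ : (ℕ →₀ ℝ) →ₗ[ℝ] ℝ, Continuous ℓ)
    {B : Set (ℕ →₀ ℝ)} (hB : IsCompact B) :
    ∃ N : ℕ, ∀ y ∈ B, ∀ k, N ≤ k → y k = 0 := by
  by_contra hcon
  push_neg at hcon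
  choose Y hYB K hK hKne using hcon
  -- define the fast-growing sequence of indices
  set N : ℕ → ℕ := fun j => Nat.rec 0
    (fun j' Nj => max (K Nj + 1) ((Y Nj).support.sup id + 1)) j with hN
  have hN0 : N 0 = 0 := rfl
  have hNsucc : ∀ j, N (j + 1) = max (K (N j) + 1) ((Y (N j)).support.sup id + 1) := fun j => rfl
  set yj : ℕ → (ℕ →₀ ℝ) := fun j => Y (N j) with hyj
  set kj : ℕ → ℕ := fun j => K (N j) with hkj
  have hk_lt : ∀ j, kj j < N (j + 1) := by
    intro j; rw [hNsucc]; exact lt_of_lt_of_le (Nat.lt_succ_self _) (le_max_left _ _)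
  have hk_ge : ∀ j, N j ≤ kj j := fun j => hK (N j)
  have hsupp_lt : ∀ j m, m ∈ (yj j).support → m < N (j + 1) := by
    intro j m hm
    rw [hNsucc]
    exact lt_of_lt_of_le (Nat.lt_succ_of_le (Finset.le_sup (f := id) hm)) (le_max_right _ _)
  have hNmono : StrictMono N := by
    apply strictMono_nat_of_lt_succ
    intro j
    exact lt_of_le_of_lt (hk_ge j) (hk_lt j)
  have hk_mono : StrictMono kj := by
    apply strictMono_nat_of_lt_succ
    intro j
    exact lt_of_lt_of_le (hk_lt j) (hk_ge (j + 1))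
  have hzero : ∀ i j, i < j → yj i (kj j) = 0 := by
    intro i j hij
    by_contra h
    have hm : kj j ∈ (yj i).support := Finsupp.mem_support_iff.mpr h
    have h1 : kj j < N (i + 1) := hsupp_lt i _ hm
    have h2 : N (i + 1) ≤ N j := hNmono.monotone hij
    exact absurd (lt_of_lt_of_le h1 (h2.trans (hk_ge j))) (lt_irrefl _)
  have hne : ∀ j, yj j (kj j) ≠ 0 := fun j => hKne (N j)
  -- define coefficients by recursion
  set G : ℕ → (ℕ → ℝ) := fun j => Nat.rec (fun _ => 0)
    (fun j' Gj => Function.update Gj j'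
      ((j' - ∑ i ∈ Finset.range j', Gj i * yj j' (kj i)) / yj j' (kj j'))) j with hG
  set c : ℕ → ℝ := fun j => G (j + 1) j with hc
  have hGsucc : ∀ j, G (j + 1) = Function.update (G j) j
      ((j - ∑ i ∈ Finset.range j, G j i * yj j (kj i)) / yj j (kj j)) := fun j => rfl
  have hGagree : ∀ j i, i < j → G j i = c i := by
    intro j
    induction j with
    | zero => intro i hi; exact absurd hi (Nat.not_lt_zero i)
    | succ j ih =>
      intro i hi
      rcases Nat.lt_succ_iff_lt_or_eq.mp hi with hi' | rfl
      · rw [hGsucc, Function.update_of_ne (Nat.ne_of_lt hi'), ih i hi']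
      · rfl
  have hkey : ∀ j, ∑ i ∈ Finset.range (j + 1), c i * yj j (kj i) = j := by
    intro j
    rw [Finset.sum_range_succ]
    have hs : ∑ i ∈ Finset.range j, c i * yj j (kj i)
        = ∑ i ∈ Finset.range j, G j i * yj j (kj i) := by
      apply Finset.sum_congr rfl
      intro i hi
      rw [hGagree j i (Finset.mem_range.mp hi)]
    rw [hs]
    have hcj : c j = (j - ∑ i ∈ Finset.range j, G j i * yj j (kj i)) / yj j (kj j) := by
      rw [hc]; simp only; rw [hGsucc, Function.update_self]
    rw [hcj, div_mul_cancel₀ _ (hne j)]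
    ring
  -- define the linear functional
  classical
  set d : ℕ → ℝ := fun m => if h : ∃ j, kj j = m then c h.choose else 0 with hd
  have hdk : ∀ j, d (kj j) = c j := by
    intro j
    rw [hd]; simp only
    have h : ∃ j', kj j' = kj j := ⟨j, rfl⟩
    rw [dif_pos h]
    congr 1
    exact hk_mono.injective h.choose_spec
  have hd0 : ∀ m, (∀ j, kj j ≠ m) → d m = 0 := by
    intro m hm
    rw [hd]; simp only
    rw [dif_neg]
    rintro ⟨j, rfl⟩
    exact hm j rfl
  set ℓ : (ℕ →₀ ℝ) →ₗ[ℝ] ℝ := Finsupp.linearCombination ℝ d with hℓ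
  -- compute ℓ (yj j) = j
  have hval : ∀ j : ℕ, ℓ (yj j) = j := by
    intro j
    rw [hℓ, Finsupp.linearCombination_apply, Finsupp.sum]
    set T : Finset ℕ := (Finset.range (j + 1)).image kj with hT
    have h1 : ∑ m ∈ (yj j).support, yj j m • d m = ∑ m ∈ (yj j).support ∪ T, yj j m • d m := by
      apply Finset.sum_subset Finset.subset_union_left
      intro m _ hm
      rw [Finsupp.notMem_support_iff.mp hm, zero_smul]
    have h2 : ∑ m ∈ T, yj j m • d m = ∑ m ∈ (yj j).support ∪ T, yj j m • d m := by
      apply Finset.sum_subset Finset.subset_union_right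
      intro m _ hm
      by_cases hex : ∃ i, kj i = m
      · obtain ⟨i, rfl⟩ := hex
        have hij : j < i := by
          by_contra hle
          push_neg at hle
          exact hm (Finset.mem_image.mpr ⟨i, Finset.mem_range.mpr (by omega), rfl⟩)
        rw [hzero j i hij, zero_smul]
      · push_neg at hex
        rw [hd0 m hex, smul_zero]
    rw [h1, ← h2, hT, Finset.sum_image (fun a _ b _ h => hk_mono.injective h)]
    have h3 : ∀ i ∈ Finset.range (j + 1), yj j (kj i) • d (kj i) = c i * yj j (kj i) := by
      intro i _
      rw [hdk i, smul_eq_mul, mul_comm]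
    rw [Finset.sum_congr rfl h3, hkey j]
  -- contradiction with compactness
  obtain ⟨M, hM⟩ := (hB.image (hcont ℓ)).bddAbove
  obtain ⟨j, hj⟩ := exists_nat_gt M
  have : ℓ (yj j) ∈ ℓ '' B := ⟨yj j, hYB (N j), rfl⟩
  have hle : (j : ℝ) ≤ M := hval j ▸ hM this
  exact absurd (lt_of_le_of_lt hle hj) (lt_irrefl _)

/-- `ℝ^ω × φ` is not an Ascoli space, where `φ = lim→ ℝⁿ` is the countable
direct sum of copies of `ℝ` (here modelled on `ℕ →₀ ℝ`) equipped with the finest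
locally convex vector topology making the inclusions `ℝ → φ` continuous, and
`ℝ^ω` carries the product topology. -/
theorem prod_pi_phi_not_isAscoli
    [t : TopologicalSpace (ℕ →₀ ℝ)] [IsTopologicalAddGroup (ℕ →₀ ℝ)]
    [ContinuousSMul ℝ (ℕ →₀ ℝ)] [LocallyConvexSpace ℝ (ℕ →₀ ℝ)]
    (hincl : ∀ n : ℕ, Continuous fun c : ℝ => Finsupp.single n c)
    (hfinest : ∀ t' : TopologicalSpace (ℕ →₀ ℝ),
      @IsTopologicalAddGroup _ t' _ → @ContinuousSMul ℝ _ _ _ t' →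
      @LocallyConvexSpace ℝ _ _ _ _ _ t' →
      (∀ n : ℕ, @Continuous _ _ _ t' fun c : ℝ => Finsupp.single n c) → t ≤ t') :
    ¬ IsAscoli ((ℕ → ℝ) × (ℕ →₀ ℝ)) := by
  intro hA
  have hcont : ∀ ℓ : (ℕ →₀ ℝ) →ₗ[ℝ] ℝ, Continuous ℓ :=
    phi_linear_continuous hincl hfinest
  have hev : ∀ n : ℕ, Continuous fun y : ℕ →₀ ℝ => y n := by
    intro n
    have := hcont (Finsupp.lapply n)
    exact this
  -- the test functions
  set f : ℕ → C((ℕ → ℝ) × (ℕ →₀ ℝ), ℝ) := fun n =>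
    ⟨fun p => min 1 |p.1 n * p.2 n|,
      continuous_const.min ((((continuous_apply n).comp continuous_fst).mul
        ((hev n).comp continuous_snd)).abs)⟩ with hf
  -- f n → 0 in the compact-open topology
  have htend : Filter.Tendsto f Filter.atTop (𝓝 0) := by
    rw [ContinuousMap.tendsto_iff_forall_isCompact_tendstoUniformlyOn]
    intro C hC
    obtain ⟨N, hN⟩ := phi_compact_support hcont (hC.image continuous_snd)
    rw [Metric.tendstoUniformlyOn_iff]
    intro ε hε
    filter_upwards [Filter.eventually_ge_atTop N] with n hn p hp
    have h2 : p.2 n = 0 := hN p.2 ⟨p, hp, rfl⟩ n hn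
    have : f n p = 0 := by
      simp [hf, h2]
    rw [this]
    simpa using hε
  have hK : IsCompact (insert (0 : C((ℕ → ℝ) × (ℕ →₀ ℝ), ℝ)) (Set.range f)) :=
    htend.isCompact_insert_range
  have heq := hA _ hK ((0 : ℕ → ℝ), (0 : ℕ →₀ ℝ))
  rw [Metric.equicontinuousAt_iff_right] at heq
  have heq2 := heq (1/2) (by norm_num)
  rw [nhds_prod_eq, Filter.eventually_iff, Filter.mem_prod_iff] at heq2
  obtain ⟨V, hV, W, hW, hVW⟩ := heq2
  rw [nhds_pi] at hV
  obtain ⟨I, s, hs, hIs⟩ := Filter.mem_pi'.mp hV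
  set n : ℕ := I.sup id + 1 with hn
  have hnI : n ∉ I := by
    intro h
    have := Finset.le_sup (f := id) h
    simp only [id_eq] at this
    omega
  -- find a scalar c with single n c⁻¹ ∈ W
  have habs : Absorbs ℝ W {Finsupp.single n (1 : ℝ)} := absorbent_nhds_zero hW _
  obtain ⟨c, hcmem, hcne⟩ :=
    (habs.eventually.and (Bornology.eventually_ne_cobounded 0)).exists
  have hyW : c⁻¹ • Finsupp.single n (1 : ℝ) ∈ W := by
    have := hcmem (Set.mem_singleton _)
    rwa [Set.mem_smul_set_iff_inv_smul_mem₀ hcne] at this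
  have hxV : Pi.single n c ∈ V := by
    apply hIs
    intro i hi
    have hin : i ≠ n := fun h => hnI (h ▸ hi)
    have h0 : Pi.single (M := fun _ : ℕ => ℝ) n c i = 0 := Pi.single_eq_of_ne (M := fun _ : ℕ => ℝ) hin c
    rw [h0]
    exact mem_of_mem_nhds (hs i)
  have hmem : (Pi.single n c, c⁻¹ • Finsupp.single n (1 : ℝ)) ∈ V ×ˢ W := ⟨hxV, hyW⟩
  have hfK : f n ∈ insert (0 : C((ℕ → ℝ) × (ℕ →₀ ℝ), ℝ)) (Set.range f) :=
    Set.mem_insert_iff.mpr (Or.inr ⟨n, rfl⟩)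
  have hd := hVW hmem ⟨f n, hfK⟩
  -- compute the two values
  have hv0 : f n ((0 : ℕ → ℝ), (0 : ℕ →₀ ℝ)) = 0 := by simp [hf]
  have hv1 : f n (Pi.single n c, c⁻¹ • Finsupp.single n (1 : ℝ)) = 1 := by
    have hxn : Pi.single (M := fun _ : ℕ => ℝ) n c n = c := Pi.single_eq_same (M := fun _ : ℕ => ℝ) n c
    have hyn : (c⁻¹ • Finsupp.single n (1 : ℝ)) n = c⁻¹ := by
      simp [Finsupp.single_eq_same]
    simp only [hf, ContinuousMap.coe_mk]
    rw [hxn, hyn, mul_inv_cancel₀ hcne]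
    norm_num
  rw [hv0, hv1] at hd
  rw [Real.dist_eq] at hd
  norm_num at hd
end
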